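/- arXiv:1703.00406 — 2 statements merged into one kernel-verified Lean document; each statement's English description precedes it below -/
import Mathlib

section
/- Let G be a graph with maximum degree Δ and let each vertex of degree between √Δ+1 and Δ/4 independently and uniformly choose one of its incident edges from a fixed subset of at least d_G(v) − 1 ≥ √Δ of its incident edges. Then with positive probability, every vertex of G is incident with at most √Δ + ∛Δ + 1 chosen edges. -/
open Finset Real

/-- Under the uniform independent choices (one edge `f v ∈ F v` for each `v ∈ VM`),
the probability of the event `P`: the number of good outcomes divided by the total
number of outcomes. -/
noncomputable def choiceProb {V : Type} [Fintype V] [DecidableEq V]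
    (VM : Finset V) (F : V → Finset (Sym2 V))
    (P : ({x // x ∈ VM} → Sym2 V) → Prop) : ℝ :=
  (((↑(Fintype.piFinset fun v : {x // x ∈ VM} => F v.1) :
      Set ({x // x ∈ VM} → Sym2 V)) ∩ {f | P f}).ncard : ℝ) /
    (Fintype.piFinset fun v : {x // x ∈ VM} => F v.1).card

theorem stmt_17 :
    ∃ Δ₀ : ℕ, ∀ (V : Type) [Fintype V] [DecidableEq V] (G : SimpleGraph V)
      [DecidableRel G.Adj] (VM : Finset V) (F : V → Finset (Sym2 V)),
      Δ₀ ≤ G.maxDegree →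
      (∀ v : V, v ∈ VM ↔ (Real.sqrt G.maxDegree + 1 ≤ (G.degree v : ℝ) ∧
        (G.degree v : ℝ) ≤ (G.maxDegree : ℝ) / 4)) →
      (∀ v ∈ VM, F v ⊆ G.incidenceFinset v) →
      (∀ v ∈ VM, ((G.degree v : ℤ) - 1 ≤ ((F v).card : ℤ) ∧
        Real.sqrt G.maxDegree ≤ ((F v).card : ℝ))) →
      0 < choiceProb VM F (fun f =>
        ∀ w : V, ({e : Sym2 V | (∃ v : {x // x ∈ VM}, f v = e) ∧ w ∈ e}.ncard : ℝ) ≤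
          Real.sqrt G.maxDegree + (G.maxDegree : ℝ) ^ ((1 : ℝ) / 3) + 1) := by
  use 1
  intro V _ _ G _ VM F hΔ hVM hFinc hFcard
  set Δ := G.maxDegree with hΔdef
  have hΔ1 : (1:ℝ) ≤ (Δ:ℝ) := by exact_mod_cast hΔ
  have hΔ0 : (0:ℝ) < (Δ:ℝ) := by linarith
  have hsq1 : (1:ℝ) ≤ Real.sqrt Δ := by
    rw [show (1:ℝ) = Real.sqrt 1 by simp]
    exact Real.sqrt_le_sqrt hΔ1
  have hsq0 : (0:ℝ) < Real.sqrt Δ := by linarith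
  set c : ℕ := ⌈Real.sqrt Δ⌉₊ with hc
  have hcR : Real.sqrt Δ ≤ (c:ℝ) := Nat.le_ceil _
  -- target sets
  set T : V → Finset V := fun v => (G.neighborFinset v).filter (fun w => s(v,w) ∈ F v) with hT
  have hTF : ∀ v, ∀ w ∈ T v, s(v,w) ∈ F v := by
    intro v w hw; exact (Finset.mem_filter.mp hw).2
  have hTcard : ∀ v ∈ VM, (T v).card = (F v).card := by
    intro v hv
    have himg : (F v) = (T v).image (fun w => s(v,w)) := by
      ext e
      constructor
      · intro he
        have he' := hFinc v hv he
        rw [SimpleGraph.mem_incidenceFinset] at he'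
        obtain ⟨hedge, hve⟩ := he'
        induction e with
        | h a b =>
          rw [Sym2.mem_iff] at hve
          rcases hve with rfl | rfl
          · exact Finset.mem_image.mpr ⟨b, Finset.mem_filter.mpr
              ⟨(G.mem_neighborFinset _ _).mpr hedge, he⟩, rfl⟩
          · refine Finset.mem_image.mpr ⟨a, Finset.mem_filter.mpr
              ⟨(G.mem_neighborFinset _ _).mpr hedge.symm, ?_⟩, Sym2.eq_swap⟩
            rwa [Sym2.eq_swap]
      · intro he
        obtain ⟨w, hw, rfl⟩ := Finset.mem_image.mp he
        exact hTF v w hw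
    rw [himg, Finset.card_image_of_injOn]
    intro a ha b hb hab
    have ha' : G.Adj v a := (G.mem_neighborFinset _ _).mp (Finset.mem_filter.mp ha).1
    exact (Sym2.congr_right).mp hab
  -- Hall's condition
  have hall : ∀ s : Finset {x // x ∈ VM},
      s.card ≤ (s.biUnion (fun v => (T v.1) ×ˢ (Finset.univ : Finset (Fin c)))).card := by
    intro s
    set U : Finset V := s.biUnion (fun v => T v.1) with hU
    have hprod : (s.biUnion fun v => (T v.1) ×ˢ (Finset.univ : Finset (Fin c)))
        = U ×ˢ Finset.univ := by
      ext ⟨w, i⟩; simp [Finset.mem_biUnion, hU]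
    rw [hprod, Finset.card_product, Finset.card_univ, Fintype.card_fin]
    -- lower bound on sum
    have hlow : (s.card : ℝ) * Real.sqrt Δ ≤ ∑ v ∈ s, ((T v.1).card : ℝ) := by
      have : ∀ v ∈ s, Real.sqrt Δ ≤ ((T v.1).card : ℝ) := by
        intro v hv
        rw [hTcard v.1 v.2]
        exact (hFcard v.1 v.2).2
      calc (s.card : ℝ) * Real.sqrt Δ = ∑ _v ∈ s, Real.sqrt Δ := by
            rw [Finset.sum_const, nsmul_eq_mul]
        _ ≤ _ := Finset.sum_le_sum this
    -- upper bound on sum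
    have hup : ∑ v ∈ s, ((T v.1).card) ≤ U.card * Δ := by
      have hsub : ∀ v ∈ s, T v.1 ⊆ U := fun v hv => by rw [hU]; exact Finset.subset_biUnion_of_mem (fun v : {x // x ∈ VM} => T v.1) hv
      calc ∑ v ∈ s, (T v.1).card = ∑ v ∈ s, (U.filter (fun w => w ∈ T v.1)).card := by
            refine Finset.sum_congr rfl fun v hv => ?_
            rw [Finset.filter_mem_eq_inter, Finset.inter_eq_right.mpr (hsub v hv)]
        _ = ∑ v ∈ s, ∑ w ∈ U, if w ∈ T v.1 then 1 else 0 :=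
            Finset.sum_congr rfl fun v _ => Finset.card_filter _ _
        _ = ∑ w ∈ U, ∑ v ∈ s, if w ∈ T v.1 then 1 else 0 := Finset.sum_comm
        _ ≤ ∑ _w ∈ U, Δ := by
            refine Finset.sum_le_sum fun w _ => ?_
            have : (∑ v ∈ s, if w ∈ T v.1 then 1 else 0) = (s.filter (fun v => w ∈ T v.1)).card :=
              (Finset.card_filter _ _).symm
            rw [this]
            have hinj : ∀ v ∈ s.filter (fun v => w ∈ T v.1), v.1 ∈ G.neighborFinset w := by
              intro v hv
              have hw := (Finset.mem_filter.mp hv).2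
              have : G.Adj v.1 w := (G.mem_neighborFinset _ _).mp (Finset.mem_filter.mp hw).1
              exact (G.mem_neighborFinset _ _).mpr this.symm
            calc (s.filter (fun v => w ∈ T v.1)).card ≤ (G.neighborFinset w).card :=
                  Finset.card_le_card_of_injOn (fun v => v.1) hinj
                    (fun a _ b _ hab => Subtype.ext hab)
              _ = G.degree w := (G.card_neighborFinset_eq_degree w)
              _ ≤ Δ := G.degree_le_maxDegree w
        _ = U.card * Δ := by rw [Finset.sum_const, smul_eq_mul]
    -- combine
    have hRe : (s.card : ℝ) ≤ (U.card : ℝ) * Real.sqrt Δ := by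
      have h1 : (s.card : ℝ) * Real.sqrt Δ ≤ (U.card : ℝ) * Δ := by
        calc (s.card : ℝ) * Real.sqrt Δ ≤ ∑ v ∈ s, ((T v.1).card : ℝ) := hlow
          _ = ((∑ v ∈ s, (T v.1).card : ℕ) : ℝ) := by push_cast; ring_nf
          _ ≤ (U.card : ℝ) * Δ := by exact_mod_cast hup
      have h2 : (U.card : ℝ) * Δ = ((U.card : ℝ) * Real.sqrt Δ) * Real.sqrt Δ := by
        rw [mul_assoc, Real.mul_self_sqrt (le_of_lt hΔ0)]
      exact le_of_mul_le_mul_right (by linarith [h1, h2.symm ▸ h1]) hsq0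
    have : (s.card : ℝ) ≤ ((U.card * c : ℕ) : ℝ) := by
      rw [Nat.cast_mul]
      calc (s.card : ℝ) ≤ (U.card : ℝ) * Real.sqrt Δ := hRe
        _ ≤ (U.card : ℝ) * c := by
            exact mul_le_mul_of_nonneg_left hcR (Nat.cast_nonneg _)
    exact_mod_cast this
  obtain ⟨g, hginj, hgmem⟩ :=
    (Finset.all_card_le_biUnion_card_iff_exists_injective
      (fun v : {x // x ∈ VM} => (T v.1) ×ˢ (Finset.univ : Finset (Fin c)))).mp hall
  set f : {x // x ∈ VM} → Sym2 V := fun v => s(v.1, (g v).1) with hf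
  have hfmem : ∀ v : {x // x ∈ VM}, f v ∈ F v.1 := by
    intro v
    have := hgmem v
    rw [Finset.mem_product] at this
    exact hTF v.1 (g v).1 this.1
  -- f satisfies the event P
  have hP : ∀ w : V, ({e : Sym2 V | (∃ v : {x // x ∈ VM}, f v = e) ∧ w ∈ e}.ncard : ℝ) ≤
      Real.sqrt Δ + (Δ : ℝ) ^ ((1 : ℝ) / 3) + 1 := by
    intro w
    classical
    set S : Finset {x // x ∈ VM} :=
      Finset.univ.filter (fun v : {x // x ∈ VM} => v.1 = w ∨ (g v).1 = w) with hS
    set A : Finset (Sym2 V) := S.image f with hA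
    have hsub : {e : Sym2 V | (∃ v : {x // x ∈ VM}, f v = e) ∧ w ∈ e} ⊆ ↑A := by
      rintro e ⟨⟨v, rfl⟩, hwe⟩
      have : w = v.1 ∨ w = (g v).1 := Sym2.mem_iff.mp hwe
      refine Finset.mem_coe.mpr (Finset.mem_image.mpr ⟨v, ?_, rfl⟩)
      rw [hS, Finset.mem_filter]
      exact ⟨Finset.mem_univ _, by tauto⟩
    have hScard : S.card ≤ c + 1 := by
      have hsplit : S ⊆ (Finset.univ.filter (fun v : {x // x ∈ VM} => (g v).1 = w)) ∪
          (Finset.univ.filter (fun v : {x // x ∈ VM} => v.1 = w)) := by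
        intro v hv
        rw [hS, Finset.mem_filter] at hv
        rw [Finset.mem_union, Finset.mem_filter, Finset.mem_filter]
        tauto
      calc S.card ≤ _ := Finset.card_le_card hsplit
        _ ≤ (Finset.univ.filter (fun v : {x // x ∈ VM} => (g v).1 = w)).card +
            (Finset.univ.filter (fun v : {x // x ∈ VM} => v.1 = w)).card :=
          Finset.card_union_le _ _
        _ ≤ c + 1 := by
          gcongr
          · calc (Finset.univ.filter (fun v : {x // x ∈ VM} => (g v).1 = w)).card
                ≤ (Finset.univ : Finset (Fin c)).card := by
                  refine Finset.card_le_card_of_injOn (fun v => (g v).2)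
                    (fun _ _ => Finset.mem_univ _) ?_
                  intro a ha b hb hab
                  rw [Finset.mem_coe, Finset.mem_filter] at ha hb
                  exact hginj (Prod.ext (ha.2.trans hb.2.symm) hab)
              _ = c := by simp
          · refine Finset.card_le_one.mpr ?_
            intro a ha b hb
            rw [Finset.mem_filter] at ha hb
            exact Subtype.ext (ha.2.trans hb.2.symm)
    have hAcard : A.card ≤ c + 1 := le_trans (Finset.card_image_le) hScard
    have hn : ({e : Sym2 V | (∃ v : {x // x ∈ VM}, f v = e) ∧ w ∈ e}.ncard : ℝ) ≤ (c + 1 : ℕ) := by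
      have := Set.ncard_le_ncard hsub (A.finite_toSet)
      rw [Set.ncard_coe_finset] at this
      exact_mod_cast le_trans this hAcard
    have hc13 : ((c : ℝ) + 1) ≤ Real.sqrt Δ + (Δ : ℝ) ^ ((1 : ℝ) / 3) + 1 := by
      have h1 : (c : ℝ) < Real.sqrt Δ + 1 := Nat.ceil_lt_add_one (Real.sqrt_nonneg _)
      have h2 : (1 : ℝ) ≤ (Δ : ℝ) ^ ((1 : ℝ) / 3) :=
        Real.one_le_rpow hΔ1 (by norm_num)
      linarith only [h1, h2]
    calc ({e : Sym2 V | (∃ v : {x // x ∈ VM}, f v = e) ∧ w ∈ e}.ncard : ℝ)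
        ≤ (c + 1 : ℕ) := hn
      _ = (c : ℝ) + 1 := by push_cast; ring
      _ ≤ _ := hc13
  -- conclude positivity of choiceProb
  have hfpi : f ∈ Fintype.piFinset fun v : {x // x ∈ VM} => F v.1 :=
    Fintype.mem_piFinset.mpr hfmem
  rw [choiceProb]
  apply div_pos
  · rw [Nat.cast_pos, Set.ncard_pos (Set.Finite.inter_of_left (Finset.finite_toSet _) _)]
    exact ⟨f, hfpi, hP⟩
  · rw [Nat.cast_pos, Finset.card_pos]
    exact ⟨f, hfpi⟩
end

section
/- Let G be a graph with maximum degree Δ and let V_L = {v : d_G(v) ≥ Δ/32}. Pick each edge incident with some vertex of V_L independently with probability 6/√Δ, and let H be the graph induced by picked edges. Then with positive probability: d_H(v) ≤ 6√Δ + ∛Δ for every vertex v, and d_H(v) ≥ 3√Δ/16 − ∛Δ for every v ∈ V_L. -/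
open Finset Real MeasureTheory

/-- The set of edges of `G` incident with a vertex of degree at least `Δ/32`
(the vertices of `V_L`). -/
noncomputable def largeEdges {V : Type} [Fintype V] [DecidableEq V] (G : SimpleGraph V)
    [DecidableRel G.Adj] : Finset (Sym2 V) :=
  G.edgeFinset.filter
    (fun e => ∃ v : V, v ∈ e ∧ (G.maxDegree : ℝ) / 32 ≤ (G.degree v : ℝ))

/-- The product measure in which each edge incident with `V_L` is picked
independently with probability `6/√Δ`. -/
noncomputable def pickMeasure {V : Type} [Fintype V] [DecidableEq V]
    (G : SimpleGraph V) [DecidableRel G.Adj]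
    (hp : ENNReal.ofReal (6 / Real.sqrt G.maxDegree) ≤ 1) :
    Measure ({e // e ∈ largeEdges G} → Bool) :=
  Measure.pi fun _ =>
    (PMF.bernoulli (ENNReal.ofReal (6 / Real.sqrt G.maxDegree)).toNNReal
      ((ENNReal.toNNReal_mono ENNReal.one_ne_top hp).trans_eq ENNReal.toNNReal_one)).toMeasure

/-- The degree of `v` in the graph `H` induced by the picked edges. -/
noncomputable def pickedDeg {V : Type} [Fintype V] [DecidableEq V]
    (G : SimpleGraph V) [DecidableRel G.Adj]
    (f : {e // e ∈ largeEdges G} → Bool) (v : V) : ℕ :=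
  {w : V | ∃ h : s(v, w) ∈ largeEdges G, f ⟨s(v, w), h⟩ = true}.ncard

open Classical in
lemma bf_round {ι W : Type} [Fintype ι] [DecidableEq ι] [Fintype W] [DecidableEq W]
    (inc : ι → Finset W) (hinc : ∀ i, (inc i).card ≤ 2) :
    ∀ (n : ℕ) (y : ι → ℝ), (univ.filter fun i => y i ≠ 0 ∧ y i ≠ 1).card ≤ n →
    (∀ i, 0 ≤ y i ∧ y i ≤ 1) →
    ∃ χ : ι → ℝ, (∀ i, χ i = 0 ∨ χ i = 1) ∧ (∀ i, (y i = 0 ∨ y i = 1) → χ i = y i) ∧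
      ∀ v : W, |∑ i ∈ univ.filter (fun i => v ∈ inc i), (χ i - y i)| < 2 := by
  intro n
  induction n with
  | zero =>
    intro y hcard hy
    refine ⟨y, ?_, fun i _ => rfl, ?_⟩
    · intro i
      by_contra hcon
      push_neg at hcon
      have : i ∈ univ.filter fun i => y i ≠ 0 ∧ y i ≠ 1 := by
        simp [hcon.1, hcon.2]
      have := Finset.card_pos.mpr ⟨i, this⟩
      omega
    · intro v; simp
  | succ n ih =>
    intro y hcard hy
    set F := univ.filter fun i => y i ≠ 0 ∧ y i ≠ 1 with hFdef
    by_cases hF : F = ∅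
    · refine ⟨y, ?_, fun i _ => rfl, ?_⟩
      · intro i
        by_contra hcon
        push_neg at hcon
        have : i ∈ F := by simp [hFdef, hcon.1, hcon.2]
        simp [hF] at this
      · intro v; simp
    · have hFne : F.Nonempty := Finset.nonempty_iff_ne_empty.mpr hF
      have hfrac : ∀ i ∈ F, 0 < y i ∧ y i < 1 := by
        intro i hi
        simp only [hFdef, mem_filter] at hi
        exact ⟨lt_of_le_of_ne (hy i).1 (Ne.symm hi.2.1), lt_of_le_of_ne (hy i).2 hi.2.2⟩
      set A := univ.filter fun v : W => 3 ≤ (F.filter fun i => v ∈ inc i).card with hAdef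
      -- counting
      have hAF : A.card < F.card := by
        have h1 : A.card • 3 ≤ ∑ v ∈ A, (F.filter fun i => v ∈ inc i).card :=
          Finset.card_nsmul_le_sum A _ 3 (fun v hv => by
            simp only [hAdef, mem_filter] at hv; exact hv.2)
        have h2 : ∑ v ∈ A, (F.filter fun i => v ∈ inc i).card
            ≤ ∑ v ∈ univ, (F.filter fun i => v ∈ inc i).card :=
          Finset.sum_le_sum_of_subset (subset_univ A)
        have h3 : ∑ v ∈ univ, (F.filter fun i => v ∈ inc i).card
            = ∑ i ∈ F, (inc i).card := by
          simp_rw [Finset.card_filter]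
          rw [Finset.sum_comm]
          congr 1
          ext i
          rw [← Finset.card_filter]
          congr 1
          exact Finset.filter_univ_mem (inc i)
        have h4 : ∑ i ∈ F, (inc i).card ≤ F.card • 2 :=
          Finset.sum_le_card_nsmul F _ 2 (fun i _ => hinc i)
        have hcge : 1 ≤ F.card := Finset.card_pos.mpr hFne
        simp only [smul_eq_mul] at h1 h4
        omega
      -- kernel vector
      have hker : ∃ z₀ : {i // i ∈ F} → ℝ, z₀ ≠ 0 ∧
          (Matrix.of (fun (a : {v // v ∈ A}) (j : {i // i ∈ F}) =>
            if (a.1 : W) ∈ inc j.1 then (1:ℝ) else 0)).mulVec z₀ = 0 := by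
        set M := Matrix.of (fun (a : {v // v ∈ A}) (j : {i // i ∈ F}) =>
            if (a.1 : W) ∈ inc j.1 then (1:ℝ) else 0)
        by_contra hcon
        push_neg at hcon
        have hinj : Function.Injective M.mulVecLin := by
          rw [← LinearMap.ker_eq_bot, LinearMap.ker_eq_bot']
          intro z hz
          by_contra hzne
          exact (hcon z hzne) hz
        have := LinearMap.finrank_le_finrank_of_injective hinj
        simp only [Module.finrank_pi, Fintype.card_coe] at this
        omega
      obtain ⟨z₀, hz₀ne, hz₀ker⟩ := hker
      set z : ι → ℝ := fun i => if h : i ∈ F then z₀ ⟨i, h⟩ else 0 with hzdef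
      have hzF : ∀ i, i ∉ F → z i = 0 := fun i hi => dif_neg hi
      have hzval : ∀ j : {i // i ∈ F}, z j.1 = z₀ j := fun j => dif_pos j.2
      have hzsum : ∀ v, v ∈ A → ∑ i ∈ univ.filter (fun i => v ∈ inc i), z i = 0 := by
        intro v hv
        have hsub : F.filter (fun i => v ∈ inc i) ⊆ univ.filter (fun i => v ∈ inc i) :=
          Finset.filter_subset_filter _ (subset_univ F)
        rw [← Finset.sum_subset hsub (fun i hi hni => by
          apply hzF
          intro hiF
          exact hni (Finset.mem_filter.mpr ⟨hiF, (Finset.mem_filter.mp hi).2⟩))]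
        have this2 : ∑ j ∈ F.attach, (if v ∈ inc j.1 then (1:ℝ) else 0) * z₀ j = 0 := by
          have h5 := congrFun hz₀ker ⟨v, hv⟩
          simp only [Matrix.mulVec, Matrix.of_apply, Pi.zero_apply, dotProduct,
            Finset.univ_eq_attach] at h5
          exact h5
        rw [Finset.sum_filter]
        rw [← Finset.sum_attach F (fun i => if v ∈ inc i then z i else 0)]
        refine Eq.trans ?_ this2
        apply Finset.sum_congr rfl
        intro j _
        rw [hzval j]
        by_cases hj : v ∈ inc j.1
        · rw [if_pos hj, if_pos hj, one_mul]
        · rw [if_neg hj, if_neg hj, zero_mul]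
      -- the direction set
      have hSne : ∃ i, z i ≠ 0 := by
        obtain ⟨j, hj⟩ := Function.ne_iff.mp hz₀ne
        exact ⟨j.1, by rw [hzval j]; simpa using hj⟩
      set S := univ.filter fun i => z i ≠ 0 with hSdef
      have hS : S.Nonempty := by
        obtain ⟨i, hi⟩ := hSne
        exact ⟨i, by simp [hSdef, hi]⟩
      have hSF : ∀ i ∈ S, i ∈ F := by
        intro i hi
        simp only [hSdef, mem_filter] at hi
        by_contra hiF
        exact hi.2 (hzF i hiF)
      set d : ι → ℝ := fun i => if 0 < z i then (1 - y i) / z i else y i / (-z i) with hddef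
      set t := S.inf' hS d with htdef
      have hdpos : ∀ i ∈ S, 0 < d i := by
        intro i hi
        have hif := hfrac i (hSF i hi)
        have hzne : z i ≠ 0 := by simpa [hSdef] using hi
        simp only [hddef]
        rcases lt_or_gt_of_ne hzne with hneg | hpos
        · rw [if_neg (not_lt.mpr hneg.le)]
          exact div_pos hif.1 (by linarith)
        · rw [if_pos hpos]
          exact div_pos (by linarith [hif.2]) hpos
      have ht0 : 0 < t := by
        rw [htdef, Finset.lt_inf'_iff]
        exact hdpos
      set y' : ι → ℝ := fun i => y i + t * z i with hy'def
      have hy'eq : ∀ i, z i = 0 → y' i = y i := by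
        intro i hi; simp [hy'def, hi]
      have hy'mem : ∀ i, 0 ≤ y' i ∧ y' i ≤ 1 := by
        intro i
        by_cases hzi : z i = 0
        · rw [hy'eq i hzi]; exact hy i
        · have hiS : i ∈ S := by simp [hSdef, hzi]
          have htd : t ≤ d i := Finset.inf'_le d hiS
          have hif := hfrac i (hSF i hiS)
          rcases lt_or_gt_of_ne hzi with hneg | hpos
          · have hd' : d i = y i / (-z i) := if_neg (not_lt.mpr hneg.le)
            rw [hd'] at htd
            have hle : t * (-z i) ≤ y i := by
              rw [← le_div_iff₀ (by linarith : (0:ℝ) < -z i)]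
              exact htd
            constructor
            · simp only [hy'def]; nlinarith
            · have : t * z i ≤ 0 := by nlinarith
              simp only [hy'def]; linarith [(hy i).2]
          · have hd' : d i = (1 - y i) / z i := if_pos hpos
            rw [hd'] at htd
            have hle : t * z i ≤ 1 - y i := by
              rw [← le_div_iff₀ hpos]; exact htd
            constructor
            · have : 0 ≤ t * z i := by positivity
              simp only [hy'def]; linarith [(hy i).1]
            · simp only [hy'def]; linarith
      have hy'int : ∀ i, (y i = 0 ∨ y i = 1) → y' i = y i := by
        intro i hi
        apply hy'eq
        apply hzF
        simp only [hFdef, mem_filter, not_and_or]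
        rcases hi with h | h
        · right; left; simp [h]
        · right; right; simp [h]
      obtain ⟨i₀, hi₀S, hti₀⟩ := Finset.exists_mem_eq_inf' hS d
      have hti₀' : t = d i₀ := hti₀
      have hi₀int : y' i₀ = 0 ∨ y' i₀ = 1 := by
        have hzne : z i₀ ≠ 0 := by simpa [hSdef] using hi₀S
        rcases lt_or_gt_of_ne hzne with hneg | hpos
        · left
          have hd' : d i₀ = y i₀ / (-z i₀) := by
            simp only [hddef]; rw [if_neg (not_lt.mpr hneg.le)]
          have hmul : y i₀ / (-z i₀) * z i₀ = -y i₀ := by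
            rw [div_neg, neg_mul, div_mul_cancel₀ _ hzne]
          simp only [hy'def]
          rw [hti₀', hd', hmul]
          ring
        · right
          have hd' : d i₀ = (1 - y i₀) / z i₀ := by
            simp only [hddef]; rw [if_pos hpos]
          simp only [hy'def]
          rw [hti₀', hd', div_mul_cancel₀ _ (ne_of_gt hpos)]
          ring
      -- new fractional set is smaller
      have hF'card : (univ.filter fun i => y' i ≠ 0 ∧ y' i ≠ 1).card ≤ n := by
        have hsub : (univ.filter fun i => y' i ≠ 0 ∧ y' i ≠ 1) ⊆ F.erase i₀ := by
          intro i hi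
          simp only [mem_filter] at hi
          have hiF : i ∈ F := by
            by_contra hiF
            have hyi : y i = 0 ∨ y i = 1 := by
              by_contra hcon
              push_neg at hcon
              exact hiF (by simp [hFdef, hcon.1, hcon.2])
            rw [hy'int i hyi] at hi
            rcases hyi with h | h
            · exact hi.2.1 h
            · exact hi.2.2 h
          refine Finset.mem_erase.mpr ⟨?_, hiF⟩
          rintro rfl
          rcases hi₀int with h | h
          · exact hi.2.1 h
          · exact hi.2.2 h
        have := Finset.card_le_card hsub
        rw [Finset.card_erase_of_mem (hSF i₀ hi₀S)] at this
        have hcge : 1 ≤ F.card := Finset.card_pos.mpr hFne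
        omega
      obtain ⟨χ, hχ01, hχint, hχv⟩ := ih y' hF'card hy'mem
      refine ⟨χ, hχ01, ?_, ?_⟩
      · intro i hi
        rw [hχint i (by rw [hy'int i hi]; exact hi), hy'int i hi]
      · intro v
        by_cases hvA : v ∈ A
        · have hsplit : ∑ i ∈ univ.filter (fun i => v ∈ inc i), (χ i - y i)
              = ∑ i ∈ univ.filter (fun i => v ∈ inc i), (χ i - y' i)
              + t * ∑ i ∈ univ.filter (fun i => v ∈ inc i), z i := by
            rw [Finset.mul_sum, ← Finset.sum_add_distrib]
            apply Finset.sum_congr rfl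
            intro i _
            simp only [hy'def]; ring
          rw [hsplit, hzsum v hvA, mul_zero, add_zero]
          exact hχv v
        · -- v not active: at most 2 fractional edges at v
          have hcard2 : (F.filter fun i => v ∈ inc i).card ≤ 2 := by
            simp only [hAdef, mem_filter, not_and, not_le] at hvA
            have := hvA (mem_univ v)
            omega
          have hzero : ∀ i ∈ univ.filter (fun i => v ∈ inc i),
              i ∉ F.filter (fun i => v ∈ inc i) → χ i - y i = 0 := by
            intro i hi hni
            have hiF : i ∉ F := fun hiF =>
              hni (Finset.mem_filter.mpr ⟨hiF, (Finset.mem_filter.mp hi).2⟩)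
            have hyint : y i = 0 ∨ y i = 1 := by
              by_contra hcon
              push_neg at hcon
              exact hiF (by simp [hFdef, hcon.1, hcon.2])
            rw [hχint i (by rw [hy'int i hyint]; exact hyint), hy'int i hyint]
            ring
          rw [← Finset.sum_subset (Finset.filter_subset_filter _ (subset_univ F)) hzero]
          calc |∑ i ∈ F.filter (fun i => v ∈ inc i), (χ i - y i)|
              ≤ ∑ i ∈ F.filter (fun i => v ∈ inc i), |χ i - y i| :=
                Finset.abs_sum_le_sum_abs _ _
            _ < 2 := by
                rcases Finset.eq_empty_or_nonempty (F.filter (fun i => v ∈ inc i)) with he | hne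
                · rw [he]; norm_num
                · have hlt : ∑ i ∈ F.filter (fun i => v ∈ inc i), |χ i - y i|
                      < ∑ i ∈ F.filter (fun i => v ∈ inc i), (1:ℝ) := by
                    apply Finset.sum_lt_sum_of_nonempty hne
                    intro i hi
                    have hif := hfrac i (Finset.mem_filter.mp hi).1
                    rcases hχ01 i with h | h
                    · rw [h, abs_of_nonpos (by linarith)]; linarith
                    · rw [h, abs_of_nonneg (by linarith)]; linarith
                  rw [Finset.sum_const, nsmul_eq_mul, mul_one] at hlt
                  calc ∑ i ∈ F.filter (fun i => v ∈ inc i), |χ i - y i|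
                      < ((F.filter (fun i => v ∈ inc i)).card : ℝ) := hlt
                    _ ≤ 2 := by exact_mod_cast hcard2

open Classical in
lemma card_filter_exists {V : Type} [Fintype V] [DecidableEq V] (G : SimpleGraph V)
    [DecidableRel G.Adj] (v : V) (P : {e // e ∈ largeEdges G} → Prop) :
    (univ.filter fun w : V => ∃ h : s(v,w) ∈ largeEdges G, P ⟨s(v,w), h⟩).card
      = (univ.filter fun i : {e // e ∈ largeEdges G} =>
          v ∈ (i.1 : Sym2 V) ∧ P i).card := by
  refine Finset.card_bij
    (fun w hw => ⟨s(v,w), ((Finset.mem_filter.mp hw).2).choose⟩) ?_ ?_ ?_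
  · intro w hw
    have hex := (Finset.mem_filter.mp hw).2
    exact Finset.mem_filter.mpr ⟨mem_univ _, Sym2.mem_mk_left v w, hex.choose_spec⟩
  · intro w1 h1 w2 h2 heq
    have := congrArg Subtype.val heq
    exact Sym2.congr_right.mp this
  · intro i hi
    obtain ⟨-, hvi, hPi⟩ := Finset.mem_filter.mp hi
    obtain ⟨w, hw⟩ := Sym2.mem_iff_exists.mp hvi
    have hmem : s(v,w) ∈ largeEdges G := hw ▸ i.2
    have hieq : i = ⟨s(v,w), hmem⟩ := Subtype.ext hw
    refine ⟨w, Finset.mem_filter.mpr ⟨mem_univ _, ⟨hmem, ?_⟩⟩, ?_⟩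
    · rw [← hieq]; exact hPi
    · exact (Subtype.ext hw).symm

open Classical in
lemma pickedDeg_card {V : Type} [Fintype V] [DecidableEq V] (G : SimpleGraph V)
    [DecidableRel G.Adj] (f : {e // e ∈ largeEdges G} → Bool) (v : V) :
    pickedDeg G f v = (univ.filter fun i : {e // e ∈ largeEdges G} =>
      v ∈ (i.1 : Sym2 V) ∧ f i = true).card := by
  rw [pickedDeg]
  have hset : {w : V | ∃ h : s(v,w) ∈ largeEdges G, f ⟨s(v,w), h⟩ = true}
      = ↑(univ.filter fun w : V => ∃ h : s(v,w) ∈ largeEdges G, f ⟨s(v,w), h⟩ = true) := by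
    ext w; simp
  rw [hset, Set.ncard_coe_finset]
  convert card_filter_exists G v (fun i => f i = true) using 2 <;> congr!

open Classical in
lemma incCount {V : Type} [Fintype V] [DecidableEq V] (G : SimpleGraph V)
    [DecidableRel G.Adj] (v : V) :
    (univ.filter fun i : {e // e ∈ largeEdges G} => v ∈ (i.1 : Sym2 V)).card
      = (univ.filter fun w : V => s(v,w) ∈ largeEdges G).card := by
  symm
  refine Finset.card_bij (fun w hw => ⟨s(v,w), (Finset.mem_filter.mp hw).2⟩) ?_ ?_ ?_
  · intro w hw
    exact Finset.mem_filter.mpr ⟨mem_univ _, Sym2.mem_mk_left v w⟩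
  · intro w1 h1 w2 h2 heq
    exact Sym2.congr_right.mp (congrArg Subtype.val heq)
  · intro i hi
    obtain ⟨w, hw⟩ := Sym2.mem_iff_exists.mp (Finset.mem_filter.mp hi).2
    exact ⟨w, Finset.mem_filter.mpr ⟨mem_univ _, hw ▸ i.2⟩, (Subtype.ext hw).symm⟩

theorem stmt_18 :
    ∃ Δ₀ : ℕ, ∀ (V : Type) [Fintype V] [DecidableEq V] (G : SimpleGraph V)
      [DecidableRel G.Adj],
      Δ₀ ≤ G.maxDegree →
      ∀ hp : ENNReal.ofReal (6 / Real.sqrt G.maxDegree) ≤ 1,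
      0 < pickMeasure G hp {f |
        (∀ v : V, (pickedDeg G f v : ℝ) ≤
          6 * Real.sqrt G.maxDegree + (G.maxDegree : ℝ) ^ ((1 : ℝ) / 3)) ∧
        (∀ v : V, (G.maxDegree : ℝ) / 32 ≤ (G.degree v : ℝ) →
          3 * Real.sqrt G.maxDegree / 16 - (G.maxDegree : ℝ) ^ ((1 : ℝ) / 3) ≤
            (pickedDeg G f v : ℝ))} := by
  classical
  use 64
  intro V _ _ G _ hΔ hp
  -- numerics
  have hΔR : (64:ℝ) ≤ (G.maxDegree : ℝ) := by exact_mod_cast hΔ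
  have hsq8 : (8:ℝ) ≤ Real.sqrt (G.maxDegree : ℝ) := by
    have h := Real.sqrt_le_sqrt hΔR
    rwa [show (64:ℝ) = 8^2 by norm_num, Real.sqrt_sq (by norm_num : (0:ℝ) ≤ 8)] at h
  have hsq0 : 0 < Real.sqrt (G.maxDegree : ℝ) := by linarith
  set p : ℝ := 6 / Real.sqrt (G.maxDegree : ℝ) with hpdef
  have hp0 : 0 < p := by positivity
  have hp1 : p < 1 := by rw [hpdef, div_lt_one hsq0]; linarith
  have hcbrt : (2:ℝ) ≤ (G.maxDegree:ℝ) ^ ((1:ℝ)/3) := by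
    have h2 : ((8:ℝ)) ^ ((1:ℝ)/3) = 2 := by
      rw [show (8:ℝ) = (2:ℝ) ^ (3:ℕ) by norm_num, ← Real.rpow_natCast 2 3,
        ← Real.rpow_mul (by norm_num : (0:ℝ) ≤ 2)]
      norm_num
    calc (2:ℝ) = (8:ℝ) ^ ((1:ℝ)/3) := h2.symm
      _ ≤ (G.maxDegree:ℝ) ^ ((1:ℝ)/3) :=
        Real.rpow_le_rpow (by norm_num) (by linarith) (by norm_num)
  have hΔsqrt : (G.maxDegree:ℝ) * p = 6 * Real.sqrt (G.maxDegree:ℝ) := by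
    rw [hpdef, show (G.maxDegree:ℝ) * (6 / Real.sqrt (G.maxDegree:ℝ))
      = 6 * ((G.maxDegree:ℝ) / Real.sqrt (G.maxDegree:ℝ)) by ring, Real.div_sqrt]
  -- rounding
  have hcard2 : ∀ e : Sym2 V, (univ.filter fun w => w ∈ e).card ≤ 2 := by
    intro e
    induction e using Sym2.ind with
    | _ a b =>
      have hsub : (univ.filter fun w => w ∈ s(a,b)) ⊆ {a, b} := by
        intro x hx
        simp only [Finset.mem_filter, Sym2.mem_iff] at hx
        simp [hx.2]
      calc (univ.filter fun w => w ∈ s(a,b)).card ≤ ({a,b} : Finset V).card :=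
            Finset.card_le_card hsub
        _ ≤ 2 := by simpa using Finset.card_insert_le a ({b} : Finset V)
  set inc : {e // e ∈ largeEdges G} → Finset V :=
    fun i => univ.filter (fun w => w ∈ (i.1 : Sym2 V)) with hincdef
  obtain ⟨χ, hχ01, -, hχv⟩ := bf_round inc (fun i => hcard2 i.1)
    (Fintype.card {e // e ∈ largeEdges G}) (fun _ => p)
    (le_trans (Finset.card_filter_le _ _) (le_of_eq Finset.card_univ))
    (fun _ => ⟨hp0.le, hp1.le⟩)
  set f₀ : {e // e ∈ largeEdges G} → Bool := fun i => if χ i = 1 then true else false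
    with hf₀def
  have hf₀ : ∀ i, f₀ i = true ↔ χ i = 1 := by
    intro i; by_cases h : χ i = 1 <;> simp [hf₀def, h]
  -- the key discrepancy estimate
  have key : ∀ v : V, |(pickedDeg G f₀ v : ℝ)
      - ((univ.filter fun w => s(v,w) ∈ largeEdges G).card : ℝ) * p| < 2 := by
    intro v
    have hT := hχv v
    have hTeq : univ.filter (fun i : {e // e ∈ largeEdges G} => v ∈ inc i)
        = univ.filter (fun i : {e // e ∈ largeEdges G} => v ∈ (i.1 : Sym2 V)) :=
      Finset.filter_congr (fun i _ => by simp [hincdef])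
    rw [hTeq, Finset.sum_sub_distrib] at hT
    have hsum1 : ∑ i ∈ univ.filter (fun i : {e // e ∈ largeEdges G} => v ∈ (i.1 : Sym2 V)), χ i
        = (pickedDeg G f₀ v : ℝ) := by
      have hterm : ∀ i ∈ univ.filter (fun i : {e // e ∈ largeEdges G} => v ∈ (i.1 : Sym2 V)),
          χ i = if f₀ i = true then (1:ℝ) else 0 := by
        intro i _
        rcases hχ01 i with h | h
        · rw [h, if_neg]
          rw [hf₀ i, h]; norm_num
        · rw [h, if_pos ((hf₀ i).mpr h)]
      rw [Finset.sum_congr rfl hterm, Finset.sum_boole, Finset.filter_filter,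
        pickedDeg_card G f₀ v]
    have hsum2 : ∑ _i ∈ univ.filter (fun i : {e // e ∈ largeEdges G} => v ∈ (i.1 : Sym2 V)), p
        = ((univ.filter fun w => s(v,w) ∈ largeEdges G).card : ℝ) * p := by
      rw [Finset.sum_const, nsmul_eq_mul, incCount G v]
    rwa [hsum1, hsum2] at hT
  -- degree comparisons
  have hddle : ∀ v : V, (univ.filter fun w => s(v,w) ∈ largeEdges G).card ≤ G.degree v := by
    intro v
    rw [← SimpleGraph.card_neighborFinset_eq_degree]
    apply Finset.card_le_card
    intro w hw
    have h1 := (Finset.mem_filter.mp hw).2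
    rw [largeEdges, Finset.mem_filter] at h1
    have h2 := SimpleGraph.mem_edgeFinset.mp h1.1
    rw [G.mem_edgeSet] at h2
    exact (SimpleGraph.mem_neighborFinset G v w).mpr h2
  have hddeq : ∀ v : V, (G.maxDegree:ℝ)/32 ≤ (G.degree v : ℝ) →
      (univ.filter fun w => s(v,w) ∈ largeEdges G).card = G.degree v := by
    intro v hv
    rw [← SimpleGraph.card_neighborFinset_eq_degree]
    congr 1
    ext w
    simp only [Finset.mem_filter, Finset.mem_univ, true_and,
      SimpleGraph.mem_neighborFinset]
    constructor
    · intro h1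
      rw [largeEdges, Finset.mem_filter] at h1
      have h2 := SimpleGraph.mem_edgeFinset.mp h1.1
      rwa [G.mem_edgeSet] at h2
    · intro hadj
      rw [largeEdges, Finset.mem_filter]
      exact ⟨SimpleGraph.mem_edgeFinset.mpr ((G.mem_edgeSet).mpr hadj),
        ⟨v, Sym2.mem_mk_left _ _, hv⟩⟩
  -- the two degree bounds for f₀
  have hub : ∀ v : V, (pickedDeg G f₀ v : ℝ) ≤
      6 * Real.sqrt (G.maxDegree:ℝ) + (G.maxDegree:ℝ) ^ ((1:ℝ)/3) := by
    intro v
    have hk := abs_lt.mp (key v)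
    have h2 : ((univ.filter fun w => s(v,w) ∈ largeEdges G).card : ℝ) ≤ (G.maxDegree:ℝ) := by
      exact_mod_cast le_trans (hddle v) (G.degree_le_maxDegree v)
    have h3 : ((univ.filter fun w => s(v,w) ∈ largeEdges G).card : ℝ) * p
        ≤ (G.maxDegree:ℝ) * p := mul_le_mul_of_nonneg_right h2 hp0.le
    rw [hΔsqrt] at h3
    linarith [hk.2, hcbrt]
  have hlb : ∀ v : V, (G.maxDegree:ℝ)/32 ≤ (G.degree v : ℝ) →
      3 * Real.sqrt (G.maxDegree:ℝ) / 16 - (G.maxDegree:ℝ) ^ ((1:ℝ)/3)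
        ≤ (pickedDeg G f₀ v : ℝ) := by
    intro v hv
    have hk := abs_lt.mp (key v)
    have h2 : (G.maxDegree:ℝ)/32 ≤ ((univ.filter fun w => s(v,w) ∈ largeEdges G).card : ℝ) := by
      rw [hddeq v hv]; exact hv
    have h3 : (G.maxDegree:ℝ)/32 * p
        ≤ ((univ.filter fun w => s(v,w) ∈ largeEdges G).card : ℝ) * p :=
      mul_le_mul_of_nonneg_right h2 hp0.le
    have h4 : (G.maxDegree:ℝ)/32 * p = 3 * Real.sqrt (G.maxDegree:ℝ) / 16 := by
      rw [show (G.maxDegree:ℝ)/32 * p = ((G.maxDegree:ℝ) * p) / 32 by ring, hΔsqrt]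
      ring
    linarith [hk.1, hcbrt]
  -- f₀ is in the event
  have hf₀mem : f₀ ∈ {f : {e // e ∈ largeEdges G} → Bool |
      (∀ v : V, (pickedDeg G f v : ℝ) ≤
        6 * Real.sqrt G.maxDegree + (G.maxDegree : ℝ) ^ ((1 : ℝ) / 3)) ∧
      (∀ v : V, (G.maxDegree : ℝ) / 32 ≤ (G.degree v : ℝ) →
        3 * Real.sqrt G.maxDegree / 16 - (G.maxDegree : ℝ) ^ ((1 : ℝ) / 3) ≤
          (pickedDeg G f v : ℝ))} := ⟨hub, hlb⟩
  -- the singleton has positive measure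
  have hq0 : ENNReal.ofReal (6 / Real.sqrt (G.maxDegree:ℝ)) ≠ 0 :=
    (ENNReal.ofReal_pos.mpr hp0).ne'
  have hq1 : (1:ENNReal) - ENNReal.ofReal (6 / Real.sqrt (G.maxDegree:ℝ)) ≠ 0 := by
    have : ENNReal.ofReal (6 / Real.sqrt (G.maxDegree:ℝ)) < 1 :=
      ENNReal.ofReal_lt_one.mpr hp1
    simpa [tsub_eq_zero_iff_le] using this.not_ge
  have hsingle : pickMeasure G hp {f₀} ≠ 0 := by
    rw [pickMeasure, ← Set.univ_pi_singleton f₀, Measure.pi_pi]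
    rw [Finset.prod_ne_zero_iff]
    intro i _
    rw [PMF.toMeasure_apply_singleton _ _ (measurableSet_singleton _),
      PMF.bernoulli_apply]
    cases hb : f₀ i
    · simpa using hq1
    · simpa using hq0
  exact lt_of_lt_of_le (pos_iff_ne_zero.mpr hsingle)
    (measure_mono (Set.singleton_subset_iff.mpr hf₀mem))
end
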